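/- Let d ≥ 1, k ≥ 1, N = C(d+k,d), and let k₁,...,k_N ∈ ℕ^d be multi-indices. Then the complete generalised Wronskian determinant of the monomials x^{k₁},...,x^{k_N} equals det Van_d^k(k₁,...,k_N) times the monomial x^{K − (kN/(d+1))·(1,...,1)}, where K = k₁ + ⋯ + k_N (componentwise sum); in particular the Wronskian of monomials is again a (scalar multiple of a) monomial. -/
import Mathlib


open MvPolynomial

/-- Iterated partial derivative `∂^{|r|}/∂x^r` along a multi-index `r : Fin d → ℕ`. -/
noncomputable def wDeriv (d : ℕ) (r : Fin d → ℕ)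
    (p : MvPolynomial (Fin d) ℚ) : MvPolynomial (Fin d) ℚ :=
  (List.finRange d).foldl (fun q i => (⇑(pderiv i))^[r i] q) p

lemma pderiv_iter_monomial {d : ℕ} (i : Fin d) (t : ℕ) (s : Fin d →₀ ℕ) (a : ℚ) :
    (⇑(pderiv i))^[t] (monomial s a)
      = monomial (s - Finsupp.single i t) (a * (s i).descFactorial t) := by
  induction t with
  | zero => simp
  | succ t ih =>
    rw [Function.iterate_succ_apply', ih, pderiv_monomial]
    have h1 : (s - Finsupp.single i t) i = s i - t := by
      simp [Finsupp.tsub_apply]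
    rw [h1, tsub_tsub, ← Finsupp.single_add, Nat.descFactorial_succ]
    push_cast
    ring_nf

lemma foldl_pderiv_monomial {d : ℕ} (rr : Fin d → ℕ) (l : List (Fin d)) (hl : l.Nodup)
    (s : Fin d →₀ ℕ) (a : ℚ) :
    l.foldl (fun q i => (⇑(pderiv i))^[rr i] q) (monomial s a)
      = monomial (s - (l.map fun i => Finsupp.single i (rr i)).sum)
          (a * (l.map fun i => ((s i).descFactorial (rr i) : ℚ)).prod) := by
  induction l generalizing s a with
  | nil => simp
  | cons i l ih =>
    have hnd := List.nodup_cons.mp hl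
    rw [List.foldl_cons, pderiv_iter_monomial, ih hnd.2]
    have hmap : (l.map fun i' => (((s - Finsupp.single i (rr i)) i').descFactorial (rr i') : ℚ))
        = l.map fun i' => ((s i').descFactorial (rr i') : ℚ) := by
      apply List.map_congr_left
      intro i' hi'
      have hne : i ≠ i' := fun h => hnd.1 (h ▸ hi')
      simp [Finsupp.tsub_apply, Finsupp.single_apply, hne]
    rw [hmap]
    rw [tsub_tsub]
    simp [mul_assoc, mul_comm, mul_left_comm]

lemma prod_monomial {ι σ : Type*} [DecidableEq σ] (s : Finset ι) (f : ι → (σ →₀ ℕ)) (g : ι → ℚ) :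
    ∏ i ∈ s, (monomial (f i) (g i) : MvPolynomial σ ℚ) = monomial (∑ i ∈ s, f i) (∏ i ∈ s, g i) := by
  induction s using Finset.cons_induction with
  | empty => simp
  | cons i s hi ih => rw [Finset.prod_cons, ih, Finset.sum_cons, Finset.prod_cons, monomial_mul]

lemma sum_single_apply {d : ℕ} (f : Fin d → ℕ) (j : Fin d) :
    (∑ i, Finsupp.single i (f i)) j = f j := by
  rw [Finsupp.finset_sum_apply]
  simp [Finsupp.single_apply]

lemma wDeriv_monomial {d : ℕ} (rr m : Fin d → ℕ) :
    wDeriv d rr (∏ i, X i ^ m i)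
      = monomial ((∑ i, Finsupp.single i (m i)) - ∑ i, Finsupp.single i (rr i))
          (∏ i, ((m i).descFactorial (rr i) : ℚ)) := by
  have h0 : (∏ i, (X i ^ m i : MvPolynomial (Fin d) ℚ))
      = monomial (∑ i, Finsupp.single i (m i)) 1 := by
    simp only [X_pow_eq_monomial, prod_monomial, Finset.prod_const_one]
  rw [wDeriv, h0, foldl_pderiv_monomial rr _ (List.nodup_finRange d), one_mul,
    ← Fin.sum_univ_def, ← Fin.prod_univ_def]
  simp only [sum_single_apply]


lemma det_desc_eq_det_pow (d k N : ℕ)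
    (r : Fin N → Fin d → ℕ)
    (hcomp : ∀ v : Fin d → ℕ, (∑ i, v i) ≤ k ↔ ∃ j, r j = v)
    (kk : Fin N → Fin d → ℕ) :
    Matrix.det (Matrix.of fun j n : Fin N => ∏ i, (((kk n i).descFactorial (r j i) : ℚ)))
      = Matrix.det (Matrix.of fun j n : Fin N => ∏ i, ((kk n i : ℚ)) ^ (r j i)) := by
  classical
  set P : (Fin d → ℕ) → (Fin N → ℚ) := fun s n => ∏ i, (kk n i : ℚ) ^ s i with hP
  set A : Fin N → Finset (Fin d → ℕ) :=
    fun j => Fintype.piFinset (fun i => Finset.range (r j i + 1)) with hA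
  set co : Fin N → (Fin d → ℕ) → ℚ :=
    fun j q => ∏ i, (descPochhammer ℚ (r j i)).coeff (q i) with hco
  have hrow : ∀ j : Fin N,
      (Matrix.of fun j n : Fin N => ∏ i, (((kk n i).descFactorial (r j i) : ℚ))) j
        = ∑ q ∈ A j, co j q • P q := by
    intro j
    funext n
    rw [Finset.sum_apply]
    have : ∀ i : Fin d, (((kk n i).descFactorial (r j i) : ℚ))
        = ∑ s ∈ Finset.range (r j i + 1),
            (descPochhammer ℚ (r j i)).coeff s * (kk n i : ℚ) ^ s := by
      intro i
      rw [← descPochhammer_eval_eq_descFactorial ℚ (kk n i) (r j i)]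
      rw [Polynomial.eval_eq_sum_range (p := descPochhammer ℚ (r j i)) ((kk n i : ℚ))]
      rw [descPochhammer_natDegree]
    simp only [Matrix.of_apply]
    rw [Finset.prod_congr rfl (fun i _ => this i), Finset.prod_univ_sum]
    apply Finset.sum_congr rfl
    intro q _
    simp only [Pi.smul_apply, smul_eq_mul, hco, hP]
    rw [Finset.prod_mul_distrib]
  -- det as alternating map
  have hdet : ∀ M : Matrix (Fin N) (Fin N) ℚ, M.det = Matrix.detRowAlternating M := fun _ => rfl
  rw [hdet]
  have : (Matrix.of fun j n : Fin N => ∏ i, (((kk n i).descFactorial (r j i) : ℚ))) =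
      fun j => ∑ q ∈ A j, co j q • P q := funext hrow
  rw [this]
  erw [(Matrix.detRowAlternating (R := ℚ) (n := Fin N)).toMultilinearMap.map_sum_finset
      (fun j q => co j q • P q) A]
  have hrk : ∀ j, (∑ i, r j i) ≤ k := fun j => (hcomp (r j)).mpr ⟨j, rfl⟩
  have hrA : r ∈ Fintype.piFinset A := by
    rw [Fintype.mem_piFinset]
    intro j
    rw [hA, Fintype.mem_piFinset]
    intro i
    simp
  rw [Finset.sum_eq_single_of_mem r hrA]
  · -- the main term
    have h1 : ∀ j, co j (r j) = 1 := by
      intro j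
      rw [hco]
      apply Finset.prod_eq_one
      intro i _
      have hm := monic_descPochhammer ℚ (r j i)
      have := hm.coeff_natDegree
      rwa [descPochhammer_natDegree] at this
    rw [MultilinearMap.map_smul_univ]
    simp only [h1]
    rw [Finset.prod_const_one, one_smul]
    rfl
  · -- other terms vanish
    intro Q hQ hne
    rw [MultilinearMap.map_smul_univ]
    by_cases hQi : Function.Injective Q
    · -- injective Q in piFinset must equal r
      exfalso
      apply hne
      have hQle : ∀ j i, Q j i ≤ r j i := by
        intro j i
        have := Fintype.mem_piFinset.mp hQ j
        rw [hA, Fintype.mem_piFinset] at this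
        have := this i
        simpa [Nat.lt_succ_iff] using this
      -- each Q j is in the range of r
      have hmem : ∀ j, ∃ j', r j' = Q j := by
        intro j
        apply (hcomp (Q j)).mp
        calc (∑ i, Q j i) ≤ ∑ i, r j i := Finset.sum_le_sum (fun i _ => hQle j i)
          _ ≤ k := hrk j
      choose π hπ using hmem
      have hπinj : Function.Injective π := by
        intro a b hab
        apply hQi
        rw [← hπ a, ← hπ b, hab]
      have hπbij : Function.Bijective π := (Finite.injective_iff_bijective).mp hπinj
      -- total degree count
      have hsum : (∑ j, ∑ i, Q j i) = ∑ j, ∑ i, r j i := by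
        have e := Equiv.ofBijective π hπbij
        calc (∑ j, ∑ i, Q j i) = ∑ j, ∑ i, r (π j) i :=
              Finset.sum_congr rfl (fun j _ => by rw [hπ j])
          _ = ∑ j, ∑ i, r j i := Fintype.sum_bijective π hπbij _ _ (fun j => rfl)
      have hdeg : ∀ j, (∑ i, Q j i) = ∑ i, r j i := by
        have := (Finset.sum_eq_sum_iff_of_le
          (f := fun j => ∑ i, Q j i) (g := fun j => ∑ i, r j i)
          (fun j _ => Finset.sum_le_sum (fun i _ => hQle j i))).mp hsum
        exact fun j => this j (Finset.mem_univ j)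
      funext j i
      have := (Finset.sum_eq_sum_iff_of_le
        (f := fun i => Q j i) (g := fun i => r j i)
        (fun i _ => hQle j i)).mp (hdeg j)
      exact this i (Finset.mem_univ i)
    · -- non-injective: alternating map vanishes
      obtain ⟨a, b, hab, hne'⟩ : ∃ a b, Q a = Q b ∧ a ≠ b := by
        simp only [Function.Injective, not_forall] at hQi
        obtain ⟨a, b, h1, h2⟩ := hQi
        exact ⟨a, b, h1, h2⟩
      have h0 : (Matrix.detRowAlternating (R := ℚ) (n := Fin N)).toMultilinearMap
          (fun j => P (Q j)) = 0 :=
        AlternatingMap.map_eq_zero_of_eq _ _ (show P (Q a) = P (Q b) by rw [hab]) hne'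
      rw [h0, smul_zero]


lemma sum_coord_eq (d k N : ℕ) (hd : 1 ≤ d)
    (r : Fin N → Fin d → ℕ) (hinj : Function.Injective r)
    (hcomp : ∀ v : Fin d → ℕ, (∑ i, v i) ≤ k ↔ ∃ j, r j = v)
    (S : ℕ) (hS : S * (d + 1) = k * N) (i : Fin d) :
    (∑ j, r j i) = S := by
  classical
  have hrk : ∀ j, (∑ i, r j i) ≤ k := fun j => (hcomp (r j)).mpr ⟨j, rfl⟩
  -- generic permutation principle
  have perm_sum : ∀ (F : (Fin d → ℕ) → (Fin d → ℕ)),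
      (∀ v, (∑ i, v i) ≤ k → (∑ i, F v i) ≤ k) →
      (∀ v, (∑ i, v i) ≤ k → F (F v) = v) →
      ∀ (φ : (Fin d → ℕ) → ℕ), (∑ j, φ (r j)) = ∑ j, φ (F (r j)) := by
    intro F hF1 hF2 φ
    have hmem : ∀ j, ∃ j', r j' = F (r j) := fun j => (hcomp _).mp (hF1 _ (hrk j))
    choose π hπ using hmem
    have hinv : ∀ j, π (π j) = j := by
      intro j
      apply hinj
      rw [hπ, hπ, hF2 _ (hrk j)]
    have hπbij : Function.Bijective π :=
      Function.Involutive.bijective hinv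
    calc (∑ j, φ (r j)) = ∑ j, φ (r (π j)) :=
          (Fintype.sum_bijective π hπbij _ _ (fun j => rfl)).symm
      _ = ∑ j, φ (F (r j)) := Finset.sum_congr rfl (fun j _ => by rw [hπ])
  -- coordinate swap: all coordinate sums are equal
  have hswap : ∀ a b : Fin d, (∑ j, r j a) = ∑ j, r j b := by
    intro a b
    have := perm_sum (fun v => v ∘ Equiv.swap a b)
      (fun v hv => by
        show (∑ i', v (Equiv.swap a b i')) ≤ k
        rw [Equiv.sum_comp (Equiv.swap a b) v]
        exact hv)
      (fun v _ => by
        funext x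
        show v (Equiv.swap a b (Equiv.swap a b x)) = v x
        rw [Equiv.swap_apply_self])
      (fun v => v a)
    rw [this]
    apply Finset.sum_congr rfl
    intro j _
    show r j (Equiv.swap a b a) = r j b
    rw [Equiv.swap_apply_left]
  -- slack swap at coordinate i
  have hslack : (∑ j, r j i) = ∑ j, (k - ∑ i', r j i') := by
    have hupd : ∀ (v : Fin d → ℕ) (c : ℕ),
        (∑ i', Function.update v i c i') = c + ∑ i' ∈ Finset.univ \ {i}, v i' := by
      intro v c
      rw [← Finset.sum_update_of_mem (Finset.mem_univ i)]
    have hsplit : ∀ v : Fin d → ℕ, (∑ i', v i') = v i + ∑ i' ∈ Finset.univ \ {i}, v i' := by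
      intro v
      rw [← Finset.sum_update_of_mem (Finset.mem_univ i)]
      apply Finset.sum_congr rfl
      intro x _
      by_cases h : x = i
      · subst h; rw [Function.update_self]
      · rw [Function.update_of_ne h]
    have := perm_sum (fun v => Function.update v i (k - ∑ i', v i'))
      (fun v hv => by
        show (∑ i', Function.update v i (k - ∑ i', v i') i') ≤ k
        rw [hupd]
        have h1 := hsplit v
        omega)
      (fun v hv => by
        funext x
        show Function.update (Function.update v i (k - ∑ i', v i')) i
          (k - ∑ i', Function.update v i (k - ∑ i', v i') i') x = v x
        by_cases h : x = i
        · subst h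
          rw [Function.update_self, hupd]
          have h1 := hsplit v
          omega
        · rw [Function.update_of_ne h, Function.update_of_ne h])
      (fun v => v i)
    rw [this]
    apply Finset.sum_congr rfl
    intro j _
    show Function.update (r j) i (k - ∑ i', r j i') i = _
    rw [Function.update_self]
  -- now count
  have htot : (∑ j, r j i) * (d + 1) = k * N := by
    have h1 : (∑ j : Fin N, ∑ i' : Fin d, r j i') = d * ∑ j, r j i := by
      rw [Finset.sum_comm]
      have : ∀ i' : Fin d, (∑ j, r j i') = ∑ j, r j i := fun i' => hswap i' i
      rw [Finset.sum_congr rfl (fun i' _ => this i')]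
      simp [Finset.sum_const, mul_comm]
    have h2 : (∑ j : Fin N, ((∑ i', r j i') + (k - ∑ i', r j i'))) = ∑ j : Fin N, k :=
      Finset.sum_congr rfl (fun j _ => by have := hrk j; omega)
    rw [Finset.sum_add_distrib, h1, ← hslack] at h2
    simp only [Finset.sum_const, Finset.card_univ, Fintype.card_fin, smul_eq_mul] at h2
    have : d * (∑ j, r j i) + ∑ j, r j i = N * k := h2
    nlinarith [this]
  have hd1 : 0 < d + 1 := Nat.succ_pos d
  nlinarith [htot, hS]


/-- Let `d ≥ 1`, `k ≥ 1`, `N = C(d+k,d)`, `r : Fin N → ℕ^d` an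
enumeration of all multi-indices of total degree ≤ k, and `k₁,…,k_N ∈ ℕ^d`.  Let
`S = kN/(d+1)` be the per-coordinate degree shift (so `S(d+1) = kN`) and suppose each
shifted exponent is nonnegative: `S ≤ ∑_n k_n^i` for all `i`.  Then the complete
generalised Wronskian of the monomials `x^{k₁},…,x^{k_N}` equals the generalised
Vandermonde determinant `det(∏_i (k_n^i)^{r_j^i})` times the monomial
`x^{K − S·(1,…,1)}` where `K = k₁ + ⋯ + k_N`. -/
theorem stmt13 (d k : ℕ) (hd : 1 ≤ d) (hk : 1 ≤ k)
    (N : ℕ) (hN : N = Nat.choose (d + k) d)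
    (r : Fin N → Fin d → ℕ) (hinj : Function.Injective r)
    (hcomp : ∀ v : Fin d → ℕ, (∑ i, v i) ≤ k ↔ ∃ j, r j = v)
    (kk : Fin N → Fin d → ℕ)
    (S : ℕ) (hS : S * (d + 1) = k * N)
    (hpos : ∀ i : Fin d, S ≤ ∑ n, kk n i) :
    Matrix.det (Matrix.of fun j n : Fin N =>
        wDeriv d (r j) (∏ i, X i ^ kk n i))
      = C (Matrix.det (Matrix.of fun j n : Fin N => ∏ i, ((kk n i : ℚ)) ^ (r j i))) *
        ∏ i : Fin d, X i ^ ((∑ n, kk n i) - S) := by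
  classical
  have hT : ∀ i : Fin d, (∑ j, r j i) = S :=
    fun i => sum_coord_eq d k N hd r hinj hcomp S hS i
  -- replace the power matrix by the descending-factorial matrix
  rw [← det_desc_eq_det_pow d k N r hcomp kk]
  -- target exponent
  set E : Fin d →₀ ℕ := ∑ i, Finsupp.single i ((∑ n, kk n i) - S) with hE
  have hRHSmono : (∏ i : Fin d, (X i ^ ((∑ n, kk n i) - S) : MvPolynomial (Fin d) ℚ))
      = monomial E 1 := by
    simp only [X_pow_eq_monomial, prod_monomial, Finset.prod_const_one, hE]
  rw [hRHSmono]
  -- rewrite the Wronskian matrix entries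
  have hM : (Matrix.of fun j n : Fin N => wDeriv d (r j) (∏ i, X i ^ kk n i))
      = Matrix.of (fun j n : Fin N =>
          monomial ((∑ i, Finsupp.single i (kk n i)) - ∑ i, Finsupp.single i (r j i))
            (∏ i, (((kk n i).descFactorial (r j i) : ℚ)))) := by
    funext j n
    exact wDeriv_monomial (r j) (kk n)
  rw [hM]
  rw [Matrix.det_apply', Matrix.det_apply']
  rw [map_sum, Finset.sum_mul]
  apply Finset.sum_congr rfl
  intro σ _
  simp only [Matrix.of_apply]
  rw [prod_monomial, map_mul, map_intCast, mul_assoc, C_mul_monomial, mul_one]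
  congr 1
  set c : ℚ := ∏ n, ∏ i, (((kk n i).descFactorial (r (σ n) i) : ℚ)) with hc
  by_cases h0 : c = 0
  · rw [h0, monomial_zero, monomial_zero]
  · have hle : ∀ n i, r (σ n) i ≤ kk n i := by
      intro n i
      have h1 := (Finset.prod_ne_zero_iff.mp h0) n (Finset.mem_univ n)
      have h2 := (Finset.prod_ne_zero_iff.mp h1) i (Finset.mem_univ i)
      rw [Nat.cast_ne_zero, Ne, Nat.descFactorial_eq_zero_iff_lt, not_lt] at h2
      exact h2
    have hexp : (∑ n, ((∑ i', Finsupp.single i' (kk n i'))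
        - ∑ i', Finsupp.single i' (r (σ n) i'))) = E := by
      ext i
      rw [Finsupp.finset_sum_apply]
      have hEi : E i = (∑ n, kk n i) - S := by rw [hE, sum_single_apply]
      rw [hEi]
      have hterm : ∀ n : Fin N,
          ((∑ i', Finsupp.single i' (kk n i')) - ∑ i', Finsupp.single i' (r (σ n) i')) i
            = kk n i - r (σ n) i := by
        intro n
        rw [Finsupp.tsub_apply, sum_single_apply, sum_single_apply]
      rw [Finset.sum_congr rfl (fun n _ => hterm n)]
      have h1 : (∑ n, r (σ n) i) = S := by
        rw [← hT i]
        exact Equiv.sum_comp σ (fun j => r j i)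
      have h2 : (∑ n, (kk n i - r (σ n) i)) + ∑ n, r (σ n) i = ∑ n, kk n i := by
        rw [← Finset.sum_add_distrib]
        apply Finset.sum_congr rfl
        intro n _
        have := hle n i
        omega
      have h3 := hpos i
      omega
    rw [hexp]
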